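/- Set λ = (m+1)/2, let W(r) = (Z(r) − λ)/r² for r ∈ (0,1] with Z as in the context, let a = lim_{r→0⁺} W(r) (which exists and is negative), and let T₀ be the real analytic solution near 0, with T₀(0) = a, of the initial value problem T'(r) = −h(r, T(r))·T(r)/P̂(λ + r²·T(r)), where h(r,T) is the polynomial function equal to (2·P̂(λ + r²T) + g(λ + r²T))/r for r ≠ 0 and g is the polynomial with Q̂(x) = (x − λ)·g(x). Then there exists ε' > 0 such that W(r) = T₀(r) for all r ∈ (0, ε'). -/

import Mathlib

open Polynomial Set Filter Topology
set_option maxHeartbeats 1000000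

lemma poly_contDiff (p : Polynomial ℝ) : ContDiff ℝ 1 (fun x : ℝ => p.eval x) := by
  rw [contDiff_iff_contDiffAt]
  intro x
  have := ((analyticAt_id (𝕜 := ℝ) (z := x)).aeval_polynomial p).contDiffAt (n := 1)
  simpa [Polynomial.aeval_def, Polynomial.eval_map] using this

lemma lipschitz_slice {F : ℝ × ℝ → ℝ} {K : NNReal} {R : Set (ℝ × ℝ)}
    (h : LipschitzOnWith K F R) (c : ℝ) {I : Set ℝ}
    (hm : ∀ w ∈ I, (c, w) ∈ R) :
    LipschitzOnWith K (fun w => F (c, w)) I := by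
  intro w hw w' hw'
  have := h (hm w hw) (hm w' hw')
  simpa [Prod.edist_eq, edist_self] using this

lemma exists_lip_gen {F2 : ℝ × ℝ → ℝ} {U : Set (ℝ × ℝ)} (hU : IsOpen U)
    (hF2 : ContDiffOn ℝ 1 F2 U) {R : Set (ℝ × ℝ)} (hRU : R ⊆ U)
    (hRc : IsCompact R) (hRconv : Convex ℝ R) :
    ∃ K : NNReal, LipschitzOnWith K F2 R := by
  have hfdc : ContinuousOn (fderiv ℝ F2) U :=
    hF2.continuousOn_fderiv_of_isOpen hU le_rfl
  obtain ⟨C, hC⟩ := hRc.exists_bound_of_continuousOn (hfdc.mono hRU)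
  refine ⟨Real.toNNReal C, ?_⟩
  apply hRconv.lipschitzOnWith_of_nnnorm_fderiv_le
    (fun x hx => (hF2.differentiableOn one_ne_zero).differentiableAt (hU.mem_nhds (hRU hx)))
  intro x hx
  rw [← NNReal.coe_le_coe, coe_nnnorm, Real.coe_toNNReal']
  exact le_trans (hC x hx) (le_max_left _ _)


theorem stmt_11 (m : ℕ) (hm : 2 ≤ m)
    (lam : Fin (m - 1) → ℝ) (hmono : Monotone lam) (hlt : ∀ i, lam i < 1)
    (P Q Phat Qhat : Polynomial ℝ)
    (hP : P = ∏ i : Fin (m - 1), (X - C (2 * lam i / ((m : ℝ) + 1))))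
    (hQder : ∀ y : ℝ, (derivative Q).eval y = ((m : ℝ) + 1) * y * P.eval y)
    (hQval : Q.eval (2 / ((m : ℝ) + 1)) = 0)
    (hPhat : ∀ x : ℝ, x ≠ 0 → Phat.eval x = x ^ (m - 1) * P.eval (1 / x))
    (hQhat : ∀ x : ℝ, x ≠ 0 → Qhat.eval x = x ^ (m + 1) * Q.eval (1 / x))
    (Z : ℝ → ℝ)
    (hZan : ∃ c d : ℝ, Ioc (0 : ℝ) 1 ⊆ Ioo c d ∧ AnalyticOnNhd ℝ Z (Ioo c d))
    (hODE : ∀ r ∈ Ioc (0 : ℝ) 1,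
      r * deriv Z r * Phat.eval (Z r) + Qhat.eval (Z r) = 0)
    (hZ1 : Z 1 = 0)
    (hZ' : ∀ r ∈ Ioc (0 : ℝ) 1, deriv Z r < 0)
    (g : Polynomial ℝ)
    (hg : Qhat = (X - C (((m : ℝ) + 1) / 2)) * g)
    (S : Polynomial ℝ)
    (hS : 2 * Phat.comp (C (((m : ℝ) + 1) / 2) + X) +
        g.comp (C (((m : ℝ) + 1) / 2) + X) = X * S)
    (a : ℝ) (ha : a < 0)
    (hWlim : Tendsto (fun r => (Z r - ((m : ℝ) + 1) / 2) / r ^ 2)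
      (𝓝[>] (0 : ℝ)) (𝓝 a))
    (ε : ℝ) (hε : 0 < ε) (T₀ : ℝ → ℝ)
    (hT₀an : AnalyticOnNhd ℝ T₀ (Ioo (-ε) ε))
    (hT₀0 : T₀ 0 = a)
    (hT₀ODE : ∀ r ∈ Ioo (-ε) ε, deriv T₀ r =
      -(r * T₀ r * S.eval (r ^ 2 * T₀ r)) * T₀ r /
        Phat.eval (((m : ℝ) + 1) / 2 + r ^ 2 * T₀ r)) :
    ∃ ε' > (0 : ℝ), ∀ r ∈ Ioo (0 : ℝ) ε',
      (Z r - ((m : ℝ) + 1) / 2) / r ^ 2 = T₀ r := by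
  have hm2 : (2 : ℝ) ≤ (m : ℝ) := by exact_mod_cast hm
  set L : ℝ := ((m : ℝ) + 1) / 2 with hLdef
  set W : ℝ → ℝ := fun r => (Z r - L) / r ^ 2 with hWdef
  have hLpos : 0 < L := by rw [hLdef]; linarith
  have hmp1 : (0 : ℝ) < (m : ℝ) + 1 := by linarith
  -- Phat.eval L > 0
  have hPL : 0 < Phat.eval L := by
    rw [hPhat L hLpos.ne']
    have h1 : (0 : ℝ) < L ^ (m - 1) := pow_pos hLpos _
    have h2 : 0 < P.eval (1 / L) := by
      rw [hP, eval_prod]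
      apply Finset.prod_pos
      intro i _
      simp only [eval_sub, eval_X, eval_C]
      have h1L : 1 / L = 2 / ((m : ℝ) + 1) := by rw [hLdef, one_div_div]
      rw [h1L]
      have : 2 * lam i < 2 := by have := hlt i; linarith
      have := div_lt_div_of_pos_right this hmp1
      linarith
    exact mul_pos h1 h2
  -- η : neighborhood where Phat.eval (L + x) ≠ 0
  have hcont : ContinuousAt (fun x : ℝ => Phat.eval (L + x)) 0 :=
    ((poly_contDiff Phat).continuous.comp (continuous_const.add continuous_id)).continuousAt
  have hev : ∀ᶠ x in 𝓝 (0 : ℝ), Phat.eval (L + x) ≠ 0 := by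
    apply hcont.eventually_ne
    simpa using hPL.ne'
  obtain ⟨η, hηpos, hη⟩ := Metric.eventually_nhds_iff.mp hev
  set M : ℝ := |a| + 1 with hMdef
  have hM : 0 < M := by positivity
  -- δ₁ : W close to a
  have h1 := Metric.tendsto_nhds.mp hWlim 1 one_pos
  obtain ⟨δ₁, hδ₁pos, hWδ₁⟩ := (nhdsGT_basis (0 : ℝ)).eventually_iff.mp h1
  -- δ₂ : T₀ close to a
  have hT₀c : ContinuousAt T₀ 0 := (hT₀an 0 ⟨by linarith, hε⟩).continuousAt
  have h2 := Metric.tendsto_nhds.mp hT₀c 1 one_pos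
  obtain ⟨δ₂, hδ₂pos, hTδ₂⟩ := Metric.eventually_nhds_iff.mp h2
  set δ : ℝ := min (min δ₁ δ₂) (min (min 1 (ε / 2)) (η / (2 * M))) with hδdef
  have hδpos : 0 < δ := by
    apply lt_min (lt_min hδ₁pos hδ₂pos)
    apply lt_min (lt_min one_pos (by linarith))
    positivity
  have hδδ₁ : δ ≤ δ₁ := le_trans (min_le_left _ _) (min_le_left _ _)
  have hδδ₂ : δ ≤ δ₂ := le_trans (min_le_left _ _) (min_le_right _ _)
  have hδ1 : δ ≤ 1 := le_trans (min_le_right _ _) (le_trans (min_le_left _ _) (min_le_left _ _))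
  have hδε : δ < ε := by
    have : δ ≤ ε / 2 := le_trans (min_le_right _ _) (le_trans (min_le_left _ _) (min_le_right _ _))
    linarith
  have hδη : δ * M ≤ η / 2 := by
    have h3 : δ ≤ η / (2 * M) := le_trans (min_le_right _ _) (min_le_right _ _)
    calc δ * M ≤ (η / (2 * M)) * M := by nlinarith
      _ = η / 2 := by field_simp
  -- nonvanishing of the denominator on the rectangle
  have habs : ∀ w : ℝ, w ∈ Icc (a - 1) (a + 1) → |w| ≤ M := by
    intro w hw
    rw [hMdef, abs_le]
    constructor
    · have := neg_abs_le a; linarith [hw.1]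
    · have := le_abs_self a; linarith [hw.2]
  have hP0 : ∀ t w : ℝ, t ∈ Icc (0 : ℝ) δ → w ∈ Icc (a - 1) (a + 1) →
      Phat.eval (L + t ^ 2 * w) ≠ 0 := by
    intro t w ht hw
    apply hη
    rw [Real.dist_eq, sub_zero, abs_mul, abs_pow]
    have h4 : |t| ≤ δ := by rw [abs_of_nonneg ht.1]; exact ht.2
    have h5 : |t| ^ 2 ≤ δ := by
      calc |t| ^ 2 ≤ δ ^ 2 := by nlinarith [abs_nonneg t]
        _ ≤ δ := by nlinarith
    calc |t| ^ 2 * |w| ≤ δ * M := by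
          apply mul_le_mul h5 (habs w hw) (abs_nonneg w) hδpos.le
      _ ≤ η / 2 := hδη
      _ < η := by linarith
  -- membership
  have hWmem : ∀ r ∈ Ioo (0 : ℝ) δ, W r ∈ Icc (a - 1) (a + 1) := by
    intro r hr
    have := hWδ₁ (x := r) ⟨hr.1, lt_of_lt_of_le hr.2 hδδ₁⟩
    rw [Real.dist_eq] at this
    have := abs_lt.mp this
    constructor <;> [linarith [this.1]; linarith [this.2]]
  have hTmem : ∀ r ∈ Ico (0 : ℝ) δ, T₀ r ∈ Icc (a - 1) (a + 1) := by
    intro r hr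
    have hd : dist r 0 < δ₂ := by
      rw [Real.dist_eq, sub_zero, abs_of_nonneg hr.1]
      exact lt_of_lt_of_le hr.2 hδδ₂
    have := hTδ₂ hd
    rw [Real.dist_eq, hT₀0] at this
    have := abs_lt.mp this
    constructor <;> [linarith [this.1]; linarith [this.2]]
  -- Z decomposition
  have hzeq : ∀ r : ℝ, r ≠ 0 → Z r = L + r ^ 2 * W r := by
    intro r hr
    rw [hWdef]
    field_simp
    ring
  -- the vector field
  set F : ℝ → ℝ → ℝ := fun t w =>
    -(t * w * S.eval (t ^ 2 * w)) * w / Phat.eval (L + t ^ 2 * w) with hFdef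
  -- derivative of W
  obtain ⟨c, d, hsub, hZana⟩ := hZan
  have hWderiv : ∀ r ∈ Ioo (0 : ℝ) δ, HasDerivAt W (F r (W r)) r := by
    intro r hr
    have hr0 : (0 : ℝ) < r := hr.1
    have hrne : r ≠ 0 := hr0.ne'
    have hr1 : r ∈ Ioc (0 : ℝ) 1 := ⟨hr0, le_trans hr.2.le hδ1⟩
    have hZd : HasDerivAt Z (deriv Z r) r :=
      ((hZana r (hsub hr1)).differentiableAt).hasDerivAt
    have hP0' : Phat.eval (L + r ^ 2 * W r) ≠ 0 :=
      hP0 r (W r) ⟨hr0.le, hr.2.le⟩ (hWmem r hr)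
    have hr2ne : r ^ 2 ≠ 0 := pow_ne_zero _ hrne
    have hWd : HasDerivAt W
        ((deriv Z r * r ^ 2 - (Z r - L) * (2 * r ^ 1)) / (r ^ 2) ^ 2) r := by
      exact (hZd.sub_const L).div (hasDerivAt_pow 2 r) hr2ne
    convert hWd using 1
    -- now the algebraic identity
    have hode := hODE r hr1
    have hz : Z r = L + r ^ 2 * W r := hzeq r hrne
    have hQg : Qhat.eval (L + r ^ 2 * W r) = (r ^ 2 * W r) * g.eval (L + r ^ 2 * W r) := by
      rw [hg]; simp only [eval_mul, eval_sub, eval_X, eval_C]; ring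
    have hSx : 2 * Phat.eval (L + r ^ 2 * W r) + g.eval (L + r ^ 2 * W r)
        = (r ^ 2 * W r) * S.eval (r ^ 2 * W r) := by
      have := congrArg (Polynomial.eval (r ^ 2 * W r)) hS
      simpa [eval_add, eval_mul, eval_comp, eval_C, eval_X] using this
    rw [hz] at hode
    rw [hQg] at hode
    have hzl : Z r - L = r ^ 2 * W r := by rw [hz]; ring
    rw [hzl]
    show -(r * W r * S.eval (r ^ 2 * W r)) * W r / Phat.eval (L + r ^ 2 * W r)
      = (deriv Z r * r ^ 2 - r ^ 2 * W r * (2 * r ^ 1)) / (r ^ 2) ^ 2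
    have hden : ((r ^ 2 : ℝ)) ^ 2 ≠ 0 := pow_ne_zero _ hr2ne
    rw [div_eq_div_iff hP0' hden]
    linear_combination (-r) * hode + (r ^ 3 * W r) * hSx
  -- derivative of T₀
  have hTderiv : ∀ r ∈ Ico (0 : ℝ) δ, HasDerivAt T₀ (F r (T₀ r)) r := by
    intro r hr
    have hrε : r ∈ Ioo (-ε) ε := ⟨by linarith [hr.1], lt_of_lt_of_le hr.2 hδε.le⟩
    have hTd : HasDerivAt T₀ (deriv T₀ r) r :=
      ((hT₀an r hrε).differentiableAt).hasDerivAt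
    have := hT₀ODE r hrε
    rw [this] at hTd
    exact hTd
  -- Lipschitz field
  have hinner : ContDiff ℝ 1 (fun p : ℝ × ℝ => p.1 ^ 2 * p.2) :=
    (contDiff_fst.pow 2).mul contDiff_snd
  have hdenc : ContDiff ℝ 1 (fun p : ℝ × ℝ => Phat.eval (L + p.1 ^ 2 * p.2)) :=
    (poly_contDiff Phat).comp (contDiff_const.add hinner)
  have hUopen : IsOpen {p : ℝ × ℝ | Phat.eval (L + p.1 ^ 2 * p.2) ≠ 0} :=
    isOpen_compl_singleton.preimage hdenc.continuous
  have hnum : ContDiff ℝ 1 (fun p : ℝ × ℝ => -(p.1 * p.2 * S.eval (p.1 ^ 2 * p.2)) * p.2) := by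
    apply ContDiff.mul _ contDiff_snd
    apply ContDiff.neg
    exact (contDiff_fst.mul contDiff_snd).mul ((poly_contDiff S).comp hinner)
  have hKex : ∃ K : NNReal, LipschitzOnWith K (fun p : ℝ × ℝ => F p.1 p.2)
      (Icc (0 : ℝ) δ ×ˢ Icc (a - 1) (a + 1)) := by
    apply exists_lip_gen (U := {p : ℝ × ℝ | Phat.eval (L + p.1 ^ 2 * p.2) ≠ 0}) hUopen
    · rw [hFdef]
      exact ContDiffOn.div hnum.contDiffOn hdenc.contDiffOn (fun p hp => hp)
    · rintro ⟨t, w⟩ ⟨ht, hw⟩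
      exact hP0 t w ht hw
    · exact isCompact_Icc.prod isCompact_Icc
    · exact (convex_Icc _ _).prod (convex_Icc _ _)
  obtain ⟨K, hLip⟩ := hKex
  have hv : ∀ t : ℝ, LipschitzOnWith K (fun w => F (max 0 (min t δ)) w)
      (Icc (a - 1) (a + 1)) := fun t =>
    lipschitz_slice hLip _
      (fun w hw => ⟨⟨le_max_left _ _, max_le hδpos.le (min_le_right _ _)⟩, hw⟩)
  have hproj : ∀ u ∈ Ico (0 : ℝ) δ, max 0 (min u δ) = u := by
    intro u hu
    rw [min_eq_left hu.2.le, max_eq_right hu.1]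
  clear_value F W δ L M
  -- Gronwall
  have key : ∀ t ∈ Ioo (0 : ℝ) δ, ∀ s ∈ Ioo (0 : ℝ) t,
      dist (W t) (T₀ t) ≤ dist (W s) (T₀ s) * Real.exp (K * δ) := by
    intro t ht s hs
    have hst : s < t := hs.2
    have hIccδ : Icc s t ⊆ Ioo (0 : ℝ) δ := fun u hu => ⟨lt_of_lt_of_le hs.1 hu.1,
      lt_of_le_of_lt hu.2 ht.2⟩
    have hIcoδ : Ico s t ⊆ Ioo (0 : ℝ) δ := fun u hu => ⟨lt_of_lt_of_le hs.1 hu.1,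
      lt_of_lt_of_le hu.2 ht.2.le⟩
    have hWcont : ContinuousOn W (Icc s t) := fun u hu =>
      (hWderiv u (hIccδ hu)).continuousAt.continuousWithinAt
    have hTcont : ContinuousOn T₀ (Icc s t) := fun u hu =>
      (hTderiv u ⟨(hIccδ hu).1.le, (hIccδ hu).2⟩).continuousAt.continuousWithinAt
    have hW' : ∀ u ∈ Ico s t, HasDerivWithinAt W (F (max 0 (min u δ)) (W u)) (Ici u) u := by
      intro u hu
      rw [hproj u ⟨(hIcoδ hu).1.le, (hIcoδ hu).2⟩]
      exact (hWderiv u (hIcoδ hu)).hasDerivWithinAt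
    have hT' : ∀ u ∈ Ico s t, HasDerivWithinAt T₀ (F (max 0 (min u δ)) (T₀ u)) (Ici u) u := by
      intro u hu
      rw [hproj u ⟨(hIcoδ hu).1.le, (hIcoδ hu).2⟩]
      exact (hTderiv u ⟨(hIcoδ hu).1.le, (hIcoδ hu).2⟩).hasDerivWithinAt
    have hWs : ∀ u ∈ Ico s t, W u ∈ Icc (a - 1) (a + 1) := fun u hu => hWmem u (hIcoδ hu)
    have hTs : ∀ u ∈ Ico s t, T₀ u ∈ Icc (a - 1) (a + 1) := fun u hu =>
      hTmem u ⟨(hIcoδ hu).1.le, (hIcoδ hu).2⟩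
    have hG := dist_le_of_trajectories_ODE_of_mem
      (v := fun u w => F (max 0 (min u δ)) w) (s := fun _ => Icc (a - 1) (a + 1)) (K := K)
      (fun t _ => hv t) hWcont hW' hWs hTcont hT' hTs
      (le_refl (dist (W s) (T₀ s))) t ⟨hst.le, le_refl t⟩
    calc dist (W t) (T₀ t) ≤ dist (W s) (T₀ s) * Real.exp (K * (t - s)) := hG
      _ ≤ dist (W s) (T₀ s) * Real.exp (K * δ) := by
          apply mul_le_mul_of_nonneg_left _ dist_nonneg
          apply Real.exp_le_exp.mpr
          have hK0 : (0 : ℝ) ≤ (K : ℝ) := K.coe_nonneg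
          have h6 : t - s ≤ δ := by linarith [ht.2, hs.1]
          nlinarith
  -- take the limit s → 0⁺
  refine ⟨δ, hδpos, ?_⟩
  intro t ht
  have hTlim : Tendsto (fun s => dist (W s) (T₀ s) * Real.exp (K * δ)) (𝓝[>] (0 : ℝ))
      (𝓝 (dist a a * Real.exp (K * δ))) := by
    apply Tendsto.mul_const
    apply Tendsto.dist hWlim
    have h7 : Tendsto T₀ (𝓝 (0 : ℝ)) (𝓝 a) := by rw [← hT₀0]; exact hT₀c
    exact h7.mono_left nhdsWithin_le_nhds
  rw [dist_self, zero_mul] at hTlim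
  have hle : dist (W t) (T₀ t) ≤ 0 := by
    apply ge_of_tendsto hTlim
    filter_upwards [Ioo_mem_nhdsGT_of_mem (⟨le_refl (0 : ℝ), ht.1⟩ : (0 : ℝ) ∈ Ico (0 : ℝ) t)]
      with s hs
    exact key t ht s hs
  have hWt : (Z t - L) / t ^ 2 = W t := by rw [hWdef]
  rw [hWt]
  exact dist_le_zero.mp hle
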